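/- For 1 ≤ s ≤ 2 one has the operator inequality 0 ≤ (1+D̸²)^{-ns/2} - (1+|D̸|)^{-ns} ≤ (1+|D̸|)^{-n} ∑_{k=1}^{n} C(n,k) (2|D̸|/(1+D̸²))^k, where C(n,k) are binomial coefficients. -/

import Mathlib

/-- For `1 ≤ s ≤ 2` and `n ≥ 1` one has the (functional-calculus,
hence pointwise in the spectral variable `x`) inequality
`0 ≤ (1+x²)^{-ns/2} - (1+|x|)^{-ns}
   ≤ (1+|x|)^{-n} ∑_{k=1}^{n} (n choose k) (2|x|/(1+x²))^k`. -/
theorem resolvent_power_difference_bound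
    (n : ℕ) (hn : 1 ≤ n) (s : ℝ) (hs1 : 1 ≤ s) (hs2 : s ≤ 2) (x : ℝ) :
    0 ≤ (1 + x ^ 2) ^ (-((n : ℝ) * s) / 2) - (1 + |x|) ^ (-((n : ℝ) * s))
    ∧ (1 + x ^ 2) ^ (-((n : ℝ) * s) / 2) - (1 + |x|) ^ (-((n : ℝ) * s))
        ≤ (1 + |x|) ^ (-(n : ℝ)) *
            ∑ k ∈ Finset.Icc 1 n, (n.choose k : ℝ) * (2 * |x| / (1 + x ^ 2)) ^ k := by
  have ha0 : 0 ≤ |x| := abs_nonneg x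
  have hA : (0:ℝ) < 1 + x ^ 2 := by positivity
  have hB1 : (1:ℝ) ≤ 1 + |x| := by linarith
  have hB0 : (0:ℝ) < 1 + |x| := by linarith
  set u := 2 * |x| / (1 + x ^ 2) with hu
  have hu0 : 0 ≤ u := by positivity
  have hsq : |x| ^ 2 = x ^ 2 := sq_abs x
  have hu1 : u ≤ 1 := by
    rw [hu, div_le_one hA]
    nlinarith [sq_nonneg (|x| - 1)]
  have hU1 : (1:ℝ) ≤ 1 + u := by linarith
  have hU0 : (0:ℝ) < 1 + u := by linarith
  have key : ((1 + |x|) : ℝ) ^ (2:ℝ) = (1 + x ^ 2) * (1 + u) := by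
    rw [Real.rpow_two]
    field_simp [hu]
    rw [hu, mul_add, mul_one, mul_div_assoc', mul_div_cancel_left₀ _ hA.ne']
    nlinarith [hsq]
  have hns0 : (0:ℝ) ≤ (n:ℝ) * s := by positivity
  -- key rpow identity
  have hid : (1 + x ^ 2) ^ (-((n : ℝ) * s) / 2)
      = (1 + |x|) ^ (-((n : ℝ) * s)) * (1 + u) ^ (((n : ℝ) * s) / 2) := by
    have h1 : (1 + |x|) ^ (-((n : ℝ) * s))
        = (1 + x ^ 2) ^ (-((n : ℝ) * s) / 2) * (1 + u) ^ (-((n : ℝ) * s) / 2) := by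
      have : (1 + |x|) ^ (-((n : ℝ) * s))
          = (((1 + |x|) : ℝ) ^ (2:ℝ)) ^ (-((n : ℝ) * s) / 2) := by
        rw [← Real.rpow_mul hB0.le]
        congr 1
        ring
      rw [this, key, Real.mul_rpow hA.le hU0.le]
    rw [h1, mul_assoc, ← Real.rpow_add hU0]
    have : -((n : ℝ) * s) / 2 + (n : ℝ) * s / 2 = 0 := by ring
    rw [this, Real.rpow_zero, mul_one]
  have hdiff : (1 + x ^ 2) ^ (-((n : ℝ) * s) / 2) - (1 + |x|) ^ (-((n : ℝ) * s))
      = (1 + |x|) ^ (-((n : ℝ) * s)) * ((1 + u) ^ (((n : ℝ) * s) / 2) - 1) := by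
    rw [hid]; ring
  have hBpos : 0 ≤ (1 + |x|) ^ (-((n : ℝ) * s)) := Real.rpow_nonneg hB0.le _
  have hone : (1:ℝ) ≤ (1 + u) ^ (((n : ℝ) * s) / 2) := by
    calc (1:ℝ) = (1 + u) ^ (0:ℝ) := (Real.rpow_zero _).symm
    _ ≤ (1 + u) ^ (((n : ℝ) * s) / 2) :=
      Real.rpow_le_rpow_of_exponent_le hU1 (by positivity)
  constructor
  · rw [hdiff]
    have : 0 ≤ (1 + u) ^ (((n : ℝ) * s) / 2) - 1 := by linarith
    positivity
  · -- binomial expansion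
    have hbin : (1 + u) ^ n = 1 + ∑ k ∈ Finset.Icc 1 n, (n.choose k : ℝ) * u ^ k := by
      have hset : Finset.range (n + 1) = insert 0 (Finset.Icc 1 n) := by
        ext k
        simp [Nat.lt_succ_iff]
        omega
      rw [add_comm (1:ℝ) u, add_pow, hset,
        Finset.sum_insert (by simp)]
      simp [mul_comm]
    have h2 : (1 + u) ^ (((n : ℝ) * s) / 2) ≤ (1 + u) ^ (n : ℕ) := by
      rw [← Real.rpow_natCast (1 + u) n]
      exact Real.rpow_le_rpow_of_exponent_le hU1 (by nlinarith [Nat.cast_nonneg (α := ℝ) n])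
    have h3 : (1 + |x|) ^ (-((n : ℝ) * s)) ≤ (1 + |x|) ^ (-(n : ℝ)) := by
      apply Real.rpow_le_rpow_of_exponent_le hB1
      nlinarith [Nat.cast_nonneg (α := ℝ) n]
    have h4 : 0 ≤ (1 + u) ^ (n : ℕ) - 1 := by
      have : (1:ℝ) ≤ (1 + u) ^ n := one_le_pow₀ hU1
      linarith
    rw [hdiff]
    calc (1 + |x|) ^ (-((n : ℝ) * s)) * ((1 + u) ^ (((n : ℝ) * s) / 2) - 1)
        ≤ (1 + |x|) ^ (-((n : ℝ) * s)) * ((1 + u) ^ (n : ℕ) - 1) := by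
          apply mul_le_mul_of_nonneg_left (by linarith) hBpos
      _ ≤ (1 + |x|) ^ (-(n : ℝ)) * ((1 + u) ^ (n : ℕ) - 1) :=
          mul_le_mul_of_nonneg_right h3 h4
      _ = (1 + |x|) ^ (-(n : ℝ)) * ∑ k ∈ Finset.Icc 1 n, (n.choose k : ℝ) * u ^ k := by
          rw [hbin]; ring
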